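/- Let {s_n} be a sequence of positive integers and p a prime. Assume there exist constants K_1, K_2 > 0, a constant 0 ≤ C < 1, and n_0 such that for all n ≥ n_0, ν_p(s_n) ≤ K_1 n^C and log s_n ≥ K_2 n. Then for each fixed positive integer d, the equation m! = s_{n_1} · s_{n_2} · ... · s_{n_d} has only finitely many solutions in positive integers (m, n_1, ..., n_d). -/

import Mathlib

theorem finitely_many_factorial_products (s : ℕ → ℕ) (hs : ∀ n, 0 < s n)
    (p : ℕ) (hp : p.Prime) (K₁ K₂ C : ℝ) (hK₁ : 0 < K₁) (hK₂ : 0 < K₂)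
    (hC0 : 0 ≤ C) (hC1 : C < 1) (n₀ : ℕ)
    (hval : ∀ n : ℕ, n₀ ≤ n → (padicValNat p (s n) : ℝ) ≤ K₁ * (n : ℝ) ^ C)
    (hgrow : ∀ n : ℕ, n₀ ≤ n → Real.log (s n) ≥ K₂ * n)
    (d : ℕ) (hd : 0 < d) :
    {v : ℕ × (Fin d → ℕ) |
        0 < v.1 ∧ (∀ i, 0 < v.2 i) ∧ v.1.factorial = ∏ i, s (v.2 i)}.Finite := by
  haveI : Fact p.Prime := ⟨hp⟩
  obtain ⟨δ, hδdef⟩ : ∃ x : ℝ, x = (1 - C) / 2 := ⟨_, rfl⟩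
  have hδ : 0 < δ := by rw [hδdef]; linarith
  obtain ⟨C', hC'def⟩ : ∃ x : ℝ, x = (1 + δ) * C := ⟨_, rfl⟩
  have hC'0 : 0 ≤ C' := by rw [hC'def]; exact mul_nonneg (by linarith) hC0
  have hC'1 : C' < 1 := by
    rw [hC'def, hδdef]; nlinarith [mul_pos (show (0:ℝ) < 1 - C by linarith)
      (show (0:ℝ) < 2 - C by linarith)]
  have h1C : (0:ℝ) < 1 - C' := by linarith
  obtain ⟨b, hbdef⟩ : ∃ x : ℕ, x = (Finset.range n₀).sup (fun k => padicValNat p (s k)) := ⟨_, rfl⟩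
  obtain ⟨A, hAdef⟩ : ∃ x : ℝ, x = (1 / (δ * K₂)) ^ C := ⟨_, rfl⟩
  have hA : 0 < A := by
    rw [hAdef]; exact Real.rpow_pos_of_pos (one_div_pos.2 (mul_pos hδ hK₂)) _
  have hp0 : (0:ℝ) < (p:ℝ) := by exact_mod_cast hp.pos
  obtain ⟨G, hGdef⟩ : ∃ x : ℝ, x = p * (1 + d * K₁ * A + d * b) := ⟨_, rfl⟩
  have hG : 0 < G := by
    rw [hGdef]
    have h1 : (0:ℝ) ≤ (d:ℝ) * K₁ * A := by positivity
    have h2 : (0:ℝ) ≤ (d:ℝ) * (b:ℝ) := by positivity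
    nlinarith
  obtain ⟨M₀, hM₀def⟩ : ∃ x : ℝ, x = G ^ (1 / (1 - C')) := ⟨_, rfl⟩
  obtain ⟨M, hMdef⟩ : ∃ x : ℕ, x = ⌈M₀⌉₊ := ⟨_, rfl⟩
  obtain ⟨N, hNdef⟩ : ∃ x : ℕ, x = max n₀ ⌈Real.log (M.factorial) / K₂⌉₊ := ⟨_, rfl⟩
  have key : ∀ m : ℕ, ∀ n : Fin d → ℕ, 0 < m → m.factorial = ∏ i, s (n i) →
      m ≤ M ∧ ∀ i, n i ≤ N := by
    intro m n hm heq
    have hm1 : (1:ℝ) ≤ (m:ℝ) := by exact_mod_cast hm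
    have hm0 : (0:ℝ) < (m:ℝ) := by linarith
    obtain ⟨X, hXdef⟩ : ∃ x : ℝ, x = ((m:ℝ) * Real.log m) / K₂ := ⟨_, rfl⟩
    have hX0 : 0 ≤ X := by
      rw [hXdef]
      exact div_nonneg (mul_nonneg hm0.le (Real.log_nonneg hm1)) hK₂.le
    have hfac : ∀ i, s (n i) ≤ m.factorial := by
      intro i
      rw [heq]
      exact Finset.single_le_prod' (f := fun j => s (n j)) (fun j _ => Nat.succ_le_of_lt (hs _)) (Finset.mem_univ i)
    have hlogfac : Real.log (m.factorial) ≤ (m:ℝ) * Real.log m := by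
      calc Real.log (m.factorial) ≤ Real.log ((m:ℝ) ^ m) := by
            apply Real.log_le_log (by exact_mod_cast m.factorial_pos)
            exact_mod_cast Nat.factorial_le_pow m
        _ = (m:ℝ) * Real.log m := Real.log_pow m m
    have hval' : ∀ i, (padicValNat p (s (n i)) : ℝ) ≤ K₁ * X ^ C + b := by
      intro i
      rcases lt_or_ge (n i) n₀ with h | h
      · have h1 : padicValNat p (s (n i)) ≤ b := by
          rw [hbdef]
          exact Finset.le_sup (f := fun k => padicValNat p (s k)) (Finset.mem_range.2 h)
        have h2 : 0 ≤ K₁ * X ^ C := mul_nonneg hK₁.le (Real.rpow_nonneg hX0 _)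
        have h3 : (padicValNat p (s (n i)) : ℝ) ≤ (b:ℝ) := by exact_mod_cast h1
        linarith
      · have h1 := hval _ h
        have hlog : Real.log (s (n i)) ≤ Real.log (m.factorial) :=
          Real.log_le_log (by exact_mod_cast hs _) (by exact_mod_cast hfac i)
        have hg := hgrow _ h
        have h2 : (n i : ℝ) ≤ X := by
          rw [hXdef, le_div_iff₀ hK₂]
          linarith
        have h3 : K₁ * (n i : ℝ) ^ C ≤ K₁ * X ^ C :=
          mul_le_mul_of_nonneg_left
            (Real.rpow_le_rpow (Nat.cast_nonneg _) h2 hC0) hK₁.le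
        have h4 : (0:ℝ) ≤ (b:ℝ) := Nat.cast_nonneg _
        linarith
    have hval_eq : padicValNat p m.factorial = ∑ i, padicValNat p (s (n i)) := by
      have h0 : ∀ i ∈ (Finset.univ : Finset (Fin d)), s (n i) ≠ 0 := fun i _ => (hs _).ne'
      rw [heq, ← Nat.factorization_def _ hp, Nat.factorization_prod h0,
        Finsupp.finset_sum_apply]
      exact Finset.sum_congr rfl fun i _ => Nat.factorization_def _ hp
    have hdiv : m / p ≤ padicValNat p m.factorial := by
      rcases lt_or_ge m p with h | h
      · simp [Nat.div_eq_of_lt h]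
      · rw [padicValNat_factorial (Nat.lt_succ_self (Nat.log p m))]
        have hlogpos : 0 < Nat.log p m := Nat.log_pos hp.one_lt h
        have h1 : 1 ∈ Finset.Ico 1 (Nat.log p m + 1) := by
          rw [Finset.mem_Ico]
          exact ⟨le_refl 1, by omega⟩
        calc m / p = m / p ^ 1 := by rw [pow_one]
          _ ≤ ∑ i ∈ Finset.Ico 1 (Nat.log p m + 1), m / p ^ i :=
            Finset.single_le_sum (f := fun i => m / p ^ i)
              (fun i _ => Nat.zero_le _) h1
    have hsum : (padicValNat p m.factorial : ℝ) ≤ d * (K₁ * X ^ C + b) := by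
      rw [hval_eq]
      push_cast
      calc (∑ i, (padicValNat p (s (n i)) : ℝ))
          ≤ ∑ _i : Fin d, (K₁ * X ^ C + (b:ℝ)) :=
            Finset.sum_le_sum (fun i _ => hval' i)
        _ = d * (K₁ * X ^ C + b) := by
            rw [Finset.sum_const, Finset.card_univ, Fintype.card_fin, nsmul_eq_mul]
    have hmlt : (m:ℝ) < p * ((m / p : ℕ) : ℝ) + p := by
      have h1 : p * (m / p) + m % p = m := Nat.div_add_mod m p
      have h2 : m % p < p := Nat.mod_lt m hp.pos
      have h1' : (p:ℝ) * ((m / p : ℕ) : ℝ) + ((m % p : ℕ) : ℝ) = (m:ℝ) := by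
        exact_mod_cast congrArg (Nat.cast : ℕ → ℝ) h1
      have h2' : ((m % p : ℕ) : ℝ) < (p:ℝ) := by exact_mod_cast h2
      linarith
    have hdiv' : ((m / p : ℕ) : ℝ) ≤ (padicValNat p m.factorial : ℝ) := by
      exact_mod_cast hdiv
    have hXC : X ^ C ≤ A * (m:ℝ) ^ C' := by
      have hlm : Real.log m ≤ (m:ℝ) ^ δ / δ := Real.log_le_rpow_div hm0.le hδ
      have hX2 : X ≤ (m:ℝ) ^ (1 + δ) * (1 / (δ * K₂)) := by
        have he : (m:ℝ) ^ (1 + δ) = (m:ℝ) * (m:ℝ) ^ δ := by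
          rw [Real.rpow_add hm0, Real.rpow_one]
        have h5 : (m:ℝ) * Real.log m ≤ (m:ℝ) ^ (1 + δ) / δ := by
          rw [he, mul_div_assoc]
          exact mul_le_mul_of_nonneg_left hlm hm0.le
        calc X = ((m:ℝ) * Real.log m) / K₂ := hXdef
          _ ≤ ((m:ℝ) ^ (1 + δ) / δ) / K₂ := by
              exact div_le_div_of_nonneg_right h5 hK₂.le |>.trans_eq rfl
          _ = (m:ℝ) ^ (1 + δ) * (1 / (δ * K₂)) := by
              rw [div_div, mul_one_div]
      calc X ^ C ≤ ((m:ℝ) ^ (1 + δ) * (1 / (δ * K₂))) ^ C :=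
            Real.rpow_le_rpow hX0 hX2 hC0
        _ = ((m:ℝ) ^ (1 + δ)) ^ C * A := by
            rw [hAdef, Real.mul_rpow (Real.rpow_nonneg hm0.le _)
              (one_div_nonneg.2 (mul_pos hδ hK₂).le)]
        _ = (m:ℝ) ^ C' * A := by rw [hC'def, Real.rpow_mul hm0.le]
        _ = A * (m:ℝ) ^ C' := mul_comm _ _
    have hmain : (m:ℝ) ≤ G * (m:ℝ) ^ C' := by
      have h1 : (1:ℝ) ≤ (m:ℝ) ^ C' := Real.one_le_rpow hm1 hC'0
      have hstep : (m:ℝ) ≤ (p:ℝ) * ((d:ℝ) * (K₁ * (A * (m:ℝ) ^ C') + b)) + p := by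
        have h2 : ((m / p : ℕ) : ℝ) ≤ (d:ℝ) * (K₁ * (A * (m:ℝ) ^ C') + b) := by
          have h3 : K₁ * X ^ C ≤ K₁ * (A * (m:ℝ) ^ C') :=
            mul_le_mul_of_nonneg_left hXC hK₁.le
          have h4 := hdiv'.trans hsum
          have hd0 : (0:ℝ) ≤ (d:ℝ) := Nat.cast_nonneg _
          exact h4.trans (mul_le_mul_of_nonneg_left (by linarith) hd0)
        have h2p := mul_le_mul_of_nonneg_left h2 hp0.le
        linarith
      have hpb : (0:ℝ) ≤ (p:ℝ) * (1 + (d:ℝ) * (b:ℝ)) := by positivity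
      calc (m:ℝ) ≤ (p:ℝ) * ((d:ℝ) * (K₁ * (A * (m:ℝ) ^ C') + b)) + p := hstep
        _ = (p:ℝ) * (d:ℝ) * K₁ * A * ((m:ℝ) ^ C')
              + (p:ℝ) * (1 + (d:ℝ) * (b:ℝ)) * 1 := by ring
        _ ≤ (p:ℝ) * (d:ℝ) * K₁ * A * ((m:ℝ) ^ C')
              + (p:ℝ) * (1 + (d:ℝ) * (b:ℝ)) * ((m:ℝ) ^ C') := by
            have h6 := mul_le_mul_of_nonneg_left h1 hpb
            linarith
        _ = G * (m:ℝ) ^ C' := by rw [hGdef]; ring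
    have hml : (m:ℝ) ^ (1 - C') ≤ G := by
      have ht : (0:ℝ) < (m:ℝ) ^ C' := Real.rpow_pos_of_pos hm0 _
      rw [Real.rpow_sub hm0, Real.rpow_one, div_le_iff₀ ht]
      exact hmain
    have hfinal : (m:ℝ) ≤ M₀ := by
      have h1 : ((m:ℝ) ^ (1 - C')) ^ (1 / (1 - C')) ≤ G ^ (1 / (1 - C')) :=
        Real.rpow_le_rpow (Real.rpow_nonneg hm0.le _) hml (one_div_nonneg.2 h1C.le)
      rw [hM₀def]
      rwa [← Real.rpow_mul hm0.le, mul_one_div, div_self h1C.ne', Real.rpow_one] at h1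
    have hmM : m ≤ M := by
      have : (m:ℝ) ≤ (M:ℝ) := by rw [hMdef]; exact hfinal.trans (Nat.le_ceil M₀)
      exact_mod_cast this
    refine ⟨hmM, fun i => ?_⟩
    rcases lt_or_ge (n i) n₀ with h | h
    · rw [hNdef]; exact le_trans h.le (le_max_left _ _)
    · have hg := hgrow _ h
      have hsle : s (n i) ≤ M.factorial := le_trans (hfac i) (Nat.factorial_le hmM)
      have hlog : Real.log (s (n i)) ≤ Real.log (M.factorial) :=
        Real.log_le_log (by exact_mod_cast hs _) (by exact_mod_cast hsle)
      have h2 : (n i : ℝ) ≤ Real.log (M.factorial) / K₂ := by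
        rw [le_div_iff₀ hK₂]
        linarith
      have h3 : (n i : ℝ) ≤ (⌈Real.log (M.factorial) / K₂⌉₊ : ℝ) :=
        h2.trans (Nat.le_ceil _)
      have h4 : n i ≤ ⌈Real.log (M.factorial) / K₂⌉₊ := by exact_mod_cast h3
      rw [hNdef]
      exact le_trans h4 (le_max_right _ _)
  apply Set.Finite.subset (Set.Finite.prod (Set.finite_Iic M)
    (Set.Finite.pi fun _ : Fin d => Set.finite_Iic N))
  rintro ⟨m, n⟩ ⟨hm, hn, heq⟩
  obtain ⟨h1, h2⟩ := key m n hm heq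
  exact ⟨h1, fun i _ => h2 i⟩
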